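/- Let ℝ³ = Fin 3 → ℝ with the Euclidean dot product ⟪u, v⟫ = ∑ i, u i * v i and cross product ×. Let t, m ∈ ℝ³ with ⟪t, t⟫ = 1, ⟪m, m⟫ = 1, ⟪t, m⟫ = 0, and set n = t × m. Let κ_n, g_t, g_m ∈ ℝ with g_m > 0 and g_t ^ 2 + g_m ^ 2 = 1, set τ_g = −κ_n * g_t / g_m, ν' = −κ_n • t − τ_g • m, and g = g_t • t + g_m • m. Then ν' × n = (κ_n / g_m) • g; moreover, if κ_n ≠ 0, then g = (Real.sign κ_n) • (Real.sqrt ⟪ν' × n, ν' × n⟫)⁻¹ • (ν' × n). -/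

import Mathlib

open Matrix

/-- The Euclidean dot product on `Fin 3 → ℝ`. -/
def dot3 (u v : Fin 3 → ℝ) : ℝ := ∑ i, u i * v i

/-- Equations (grepm) and (defgp0) of the paper: with `{t, m, n = t × m}`
orthonormal, `n' = ν' = −κ_n t − τ_g m` where `τ_g = −κ_n g_t / g_m`, and
`g = g_t t + g_m m` the unit ruling direction (`g_t² + g_m² = 1`, `g_m > 0`),
one has `ν' × n = (κ_n / g_m) g`; hence if `κ_n ≠ 0`, the ruling direction is
recovered as `g = sgn(κ_n) (ν' × n)/|ν' × n|`. -/
theorem stmt5 (t m : Fin 3 → ℝ)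
    (htt : dot3 t t = 1) (hmm : dot3 m m = 1) (htm : dot3 t m = 0)
    (n : Fin 3 → ℝ) (hn : n = t ⨯₃ m)
    (κn gt gm : ℝ) (hgm : 0 < gm) (hunit : gt ^ 2 + gm ^ 2 = 1)
    (τg : ℝ) (hτ : τg = -κn * gt / gm)
    (ν' g : Fin 3 → ℝ)
    (hν : ν' = -κn • t - τg • m)
    (hg : g = gt • t + gm • m) :
    ν' ⨯₃ n = (κn / gm) • g ∧
      (κn ≠ 0 →
        g = Real.sign κn • (Real.sqrt (dot3 (ν' ⨯₃ n) (ν' ⨯₃ n)))⁻¹ • (ν' ⨯₃ n)) := by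
  have Htt : t 0 ^ 2 + t 1 ^ 2 + t 2 ^ 2 = 1 := by
    simpa [dot3, Fin.sum_univ_three, sq] using htt
  have Hmm : m 0 ^ 2 + m 1 ^ 2 + m 2 ^ 2 = 1 := by
    simpa [dot3, Fin.sum_univ_three, sq] using hmm
  have Htm : t 0 * m 0 + t 1 * m 1 + t 2 * m 2 = 0 := by
    simpa [dot3, Fin.sum_univ_three] using htm
  have hgm' : gm ≠ 0 := ne_of_gt hgm
  have h1 : ν' ⨯₃ n = (κn / gm) • g := by
    subst hn hτ hν hg
    funext i
    fin_cases i
    · simp [cross_apply, Pi.smul_apply, smul_eq_mul]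
      field_simp
      linear_combination (κn*gm*m 0)*Htt + (κn*gt*t 0)*Hmm - (κn*(gm*t 0 + gt*m 0))*Htm
    · simp [cross_apply, Pi.smul_apply, smul_eq_mul]
      field_simp
      linear_combination (κn*gm*m 1)*Htt + (κn*gt*t 1)*Hmm - (κn*(gm*t 1 + gt*m 1))*Htm
    · simp [cross_apply, Pi.smul_apply, smul_eq_mul]
      field_simp
      linear_combination (κn*gm*m 2)*Htt + (κn*gt*t 2)*Hmm - (κn*(gm*t 2 + gt*m 2))*Htm
  refine ⟨h1, fun hκ => ?_⟩
  have hgg : dot3 g g = 1 := by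
    simp only [hg, dot3, Fin.sum_univ_three, Pi.add_apply, Pi.smul_apply, smul_eq_mul]
    linear_combination (gt^2)*Htt + (gm^2)*Hmm + (2*gt*gm)*Htm + hunit
  have hdot : dot3 (ν' ⨯₃ n) (ν' ⨯₃ n) = (κn / gm)^2 := by
    rw [h1]
    simp only [dot3, Fin.sum_univ_three, Pi.smul_apply, smul_eq_mul] at hgg ⊢
    nlinarith [hgg]
  have hsqrt : Real.sqrt (dot3 (ν' ⨯₃ n) (ν' ⨯₃ n)) = |κn| / gm := by
    rw [hdot, Real.sqrt_sq_eq_abs, abs_div, abs_of_pos hgm]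
  rw [hsqrt, h1]
  rw [smul_smul, smul_smul]
  have hsign : Real.sign κn * κn = |κn| := by
    rcases hκ.lt_or_gt with h | h
    · rw [Real.sign_of_neg h, abs_of_neg h]; ring
    · rw [Real.sign_of_pos h, abs_of_pos h]; ring
  have : Real.sign κn * (|κn| / gm)⁻¹ * (κn / gm) = 1 := by
    rcases hκ.lt_or_gt with h | h
    · rw [Real.sign_of_neg h, abs_of_neg h]
      have : κn ≠ 0 := ne_of_lt h
      field_simp
    · rw [Real.sign_of_pos h, abs_of_pos h]
      have : κn ≠ 0 := ne_of_gt h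
      field_simp
  rw [this, one_smul]
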